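/- Let Q be an irreducible 3×3 real transition rate matrix with stationary probability row vector μ, and let Π be a 3×K state-dependent probability matrix with columns φ_k and Λ_k = diag(φ_k). If the underlying Markov process is irreversible (i.e. μ_i·Q_{ij} ≠ μ_j·Q_{ji} for some i, j) and the rank of Π is 3, then the observed process is irreversible: there exist r ≥ 1, observation symbols s_1, …, s_r and times t_2, …, t_r ≥ 0 with μ·Λ_{s_1}·exp(t_2 Q)·Λ_{s_2}·⋯·exp(t_r Q)·Λ_{s_r}·e ≠ μ·Λ_{s_r}·exp(t_r Q)·Λ_{s_{r−1}}·⋯·exp(t_2 Q)·Λ_{s_1}·e. -/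

import Mathlib

open Matrix

/-- Auxiliary lemma: if `μ₀ Q₀₁ - μ₁ Q₁₀ ≠ 0` then the same holds for `exp (τ • Q)` in place
of `Q` for some positive time `τ`, by a derivative argument at `τ = 0`. -/
lemma exists_pos_time_exp_ne (Q : Matrix (Fin 3) (Fin 3) ℝ) (μ : Fin 3 → ℝ)
    (hc0 : μ 0 * Q 0 1 - μ 1 * Q 1 0 ≠ 0) :
    ∃ τ : ℝ, 0 < τ ∧
      μ 0 * (NormedSpace.exp (τ • Q)) 0 1 - μ 1 * (NormedSpace.exp (τ • Q)) 1 0 ≠ 0 := by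
  letI : SeminormedRing (Matrix (Fin 3) (Fin 3) ℝ) := Matrix.linftyOpSemiNormedRing
  letI : NormedRing (Matrix (Fin 3) (Fin 3) ℝ) := Matrix.linftyOpNormedRing
  letI : NormedAlgebra ℝ (Matrix (Fin 3) (Fin 3) ℝ) := Matrix.linftyOpNormedAlgebra
  set f : ℝ → ℝ := fun u =>
    μ 0 * (NormedSpace.exp (u • Q)) 0 1 - μ 1 * (NormedSpace.exp (u • Q)) 1 0 with hf
  have hD : HasDerivAt (fun u : ℝ => NormedSpace.exp (u • Q)) Q 0 := by
    have := hasDerivAt_exp_smul_const (𝕂 := ℝ) Q (0 : ℝ)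
    simp at this
    exact this
  let L : Matrix (Fin 3) (Fin 3) ℝ →ₗ[ℝ] ℝ :=
    { toFun := fun M => μ 0 * M 0 1 - μ 1 * M 1 0
      map_add' := by intro x y; simp [Matrix.add_apply]; ring
      map_smul' := by intro c x; simp [Matrix.smul_apply]; ring }
  have hfd : HasDerivAt f (μ 0 * Q 0 1 - μ 1 * Q 1 0) 0 := by
    have := (L.toContinuousLinearMap.hasFDerivAt
      (x := NormedSpace.exp ((0:ℝ) • Q))).comp_hasDerivAt 0 hD
    simp [L, Function.comp] at this
    exact this
  have hf0 : f 0 = 0 := by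
    simp [hf, NormedSpace.exp_zero, Matrix.one_apply]
  by_contra hcon
  push_neg at hcon
  replace hcon : ∀ τ : ℝ, 0 < τ → f τ = 0 := fun τ hτ => hcon τ hτ
  have h1 : Filter.Tendsto (slope f 0) (nhdsWithin 0 (Set.Ioi 0))
      (nhds (μ 0 * Q 0 1 - μ 1 * Q 1 0)) :=
    (hasDerivAt_iff_tendsto_slope.mp hfd).mono_left
      (nhdsWithin_mono _ (fun x hx => ne_of_gt hx))
  have h2 : Filter.Tendsto (slope f 0) (nhdsWithin 0 (Set.Ioi 0)) (nhds 0) := by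
    refine Filter.Tendsto.congr' ?_ tendsto_const_nhds
    filter_upwards [self_mem_nhdsWithin] with x hx
    simp [slope_def_field, hf0, hcon x hx]
  exact hc0 (tendsto_nhds_unique h1 h2)

/-- The matrix product `Λ_{s₀} · exp(t₀Q) · Λ_{s₁} · ⋯ · exp(t_{r−1}Q) · Λ_{s_r}`
appearing in the finite-dimensional distributions of the observed process of a
continuous-time hidden Markov model with transition rate matrix `Q` and
state-dependent probability matrix `E`. -/
noncomputable def obsProd (Q : Matrix (Fin 3) (Fin 3) ℝ) {K : ℕ}
    (E : Matrix (Fin 3) (Fin K) ℝ) {r : ℕ} (s : Fin (r + 1) → Fin K)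
    (t : Fin r → ℝ) : Matrix (Fin 3) (Fin 3) ℝ :=
  Matrix.diagonal (fun a => E a (s 0)) *
    (List.ofFn fun i : Fin r =>
      NormedSpace.exp (t i • Q) * Matrix.diagonal fun a => E a (s i.succ)).prod

/-- If the underlying irreducible Markov process is irreversible and
the rank of the state-dependent probability matrix is 3, then the observed process
of the continuous-time three-state hidden Markov model is irreversible. -/
theorem observed_irreversible_of_rank_three
    (Q : Matrix (Fin 3) (Fin 3) ℝ) (μ : Fin 3 → ℝ)
    {K : ℕ} (E : Matrix (Fin 3) (Fin K) ℝ)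
    (hoff : ∀ i j : Fin 3, i ≠ j → 0 ≤ Q i j)
    (hrow : ∀ i : Fin 3, ∑ j, Q i j = 0)
    (hirr1 : (Q 0 1 + Q 0 2) * (Q 1 0 + Q 1 2) * (Q 2 0 + Q 2 1) > 0)
    (hirr2 : Q 1 0 + Q 2 0 > 0) (hirr3 : Q 0 1 + Q 2 1 > 0)
    (hirr4 : Q 0 2 + Q 1 2 > 0)
    (hpos : ∀ i, 0 < μ i) (hsum : μ 0 + μ 1 + μ 2 = 1)
    (hstat : μ ᵥ* Q = 0)
    (hE0 : ∀ a k, 0 ≤ E a k) (hE1 : ∀ a : Fin 3, ∑ k, E a k = 1)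
    (hirrev : ∃ i j : Fin 3, μ i * Q i j ≠ μ j * Q j i)
    (hrank : E.rank = 3) :
    ∃ (r : ℕ) (s : Fin (r + 1) → Fin K) (t : Fin r → ℝ), (∀ i, 0 ≤ t i) ∧
      (μ ᵥ* obsProd Q E s t) ⬝ᵥ (fun _ => (1 : ℝ)) ≠
        (μ ᵥ* obsProd Q E (s ∘ Fin.rev) (t ∘ Fin.rev)) ⬝ᵥ (fun _ => (1 : ℝ)) := by
  classical
  -- stationarity and row-sum equations, expanded
  have hs0 : μ 0 * Q 0 0 + μ 1 * Q 1 0 + μ 2 * Q 2 0 = 0 := by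
    have := congrFun hstat 0
    simpa [Matrix.vecMul, dotProduct, Fin.sum_univ_three] using this
  have hs1 : μ 0 * Q 0 1 + μ 1 * Q 1 1 + μ 2 * Q 2 1 = 0 := by
    have := congrFun hstat 1
    simpa [Matrix.vecMul, dotProduct, Fin.sum_univ_three] using this
  have hs2 : μ 0 * Q 0 2 + μ 1 * Q 1 2 + μ 2 * Q 2 2 = 0 := by
    have := congrFun hstat 2
    simpa [Matrix.vecMul, dotProduct, Fin.sum_univ_three] using this
  have hq0 : Q 0 0 + Q 0 1 + Q 0 2 = 0 := by simpa [Fin.sum_univ_three] using hrow 0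
  have hq1 : Q 1 0 + Q 1 1 + Q 1 2 = 0 := by simpa [Fin.sum_univ_three] using hrow 1
  have hq2 : Q 2 0 + Q 2 1 + Q 2 2 = 0 := by simpa [Fin.sum_univ_three] using hrow 2
  have hr0 : μ 0 * Q 0 0 + μ 0 * Q 0 1 + μ 0 * Q 0 2 = 0 := by linear_combination μ 0 * hq0
  have hr1 : μ 1 * Q 1 0 + μ 1 * Q 1 1 + μ 1 * Q 1 2 = 0 := by linear_combination μ 1 * hq1
  have hr2 : μ 2 * Q 2 0 + μ 2 * Q 2 1 + μ 2 * Q 2 2 = 0 := by linear_combination μ 2 * hq2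
  -- the irreversibility constant at the level of `Q`
  have hc0 : μ 0 * Q 0 1 - μ 1 * Q 1 0 ≠ 0 := by
    intro h
    obtain ⟨i, j, hij⟩ := hirrev
    apply hij
    fin_cases i <;> fin_cases j <;>
      simp only [Fin.zero_eta, Fin.mk_one, Fin.reduceFinMk, Fin.isValue] <;>
      linarith [hs0, hs1, hs2, hr0, hr1, hr2, h]
  obtain ⟨τ, hτpos, hc⟩ := exists_pos_time_exp_ne Q μ hc0
  set P : Matrix (Fin 3) (Fin 3) ℝ := NormedSpace.exp (τ • Q) with hP
  set A : Matrix (Fin 3) (Fin 3) ℝ := Matrix.of fun i j => μ i * P i j - μ j * P j i with hA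
  have hcA : A 0 1 ≠ 0 := hc
  -- surjectivity of `mulVec` from the rank hypothesis
  have hsurj : Function.Surjective E.mulVecLin := by
    rw [← LinearMap.range_eq_top]
    apply Submodule.eq_top_of_finrank_eq
    have hdef : E.rank = Module.finrank ℝ (LinearMap.range E.mulVecLin) := rfl
    rw [← hdef, hrank]
    simp
  obtain ⟨u, hu⟩ := hsurj (Pi.single (0 : Fin 3) (1 : ℝ))
  obtain ⟨v, hv⟩ := hsurj (Pi.single (1 : Fin 3) (1 : ℝ))
  rw [Matrix.mulVecLin_apply] at hu hv
  -- find observation symbols `a b` where the quadratic form of `A` is nonzero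
  obtain ⟨a, b, hab⟩ : ∃ a b : Fin K, (Eᵀ * A * E) a b ≠ 0 := by
    by_contra hcon
    push_neg at hcon
    have hEAE : Eᵀ * A * E = 0 := by ext a b; exact hcon a b
    apply hcA
    have h1 : u ⬝ᵥ ((Eᵀ * A * E) *ᵥ v) = 0 := by rw [hEAE]; simp
    rw [← Matrix.mulVec_mulVec, ← Matrix.mulVec_mulVec, Matrix.dotProduct_mulVec,
      Matrix.vecMul_transpose, hu, hv] at h1
    simpa [dotProduct, Matrix.mulVec, Pi.single_apply, Fin.sum_univ_three] using h1
  -- the witnessing word: two symbols `a, b`, one time `τ`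
  refine ⟨1, ![a, b], fun _ => τ, fun _ => le_of_lt hτpos, ?_⟩
  have hrev : (![a, b] ∘ Fin.rev : Fin 2 → Fin K) = ![b, a] := by
    ext i; fin_cases i <;> rfl
  have hrevt : ((fun _ : Fin 1 => τ) ∘ Fin.rev) = fun _ : Fin 1 => τ := rfl
  rw [hrev, hrevt]
  have hobs : ∀ a b : Fin K, obsProd Q E (![a, b]) (fun _ => τ) =
      Matrix.diagonal (fun x => E x a) * (P * Matrix.diagonal fun x => E x b) := by
    intro a b
    simp [obsProd, List.ofFn_succ, hP]
  have hval : ∀ a b : Fin K,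
      (μ ᵥ* obsProd Q E (![a, b]) (fun _ => τ)) ⬝ᵥ (fun _ => (1:ℝ)) =
        ∑ i, ∑ j, μ i * E i a * P i j * E j b := by
    intro a b
    rw [hobs]
    simp [Matrix.vecMul, Matrix.mul_apply, dotProduct, Matrix.diagonal_apply,
      Fin.sum_univ_three]
    ring
  rw [hval a b, hval b a]
  intro h
  apply hab
  have hAapp : ∀ i j, A i j = μ i * P i j - μ j * P j i := fun i j => rfl
  simp only [Matrix.mul_apply, Matrix.transpose_apply, hAapp, Fin.sum_univ_three] at h ⊢
  linear_combination h
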